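/- arXiv:1411.4184 — 5 statements merged into one kernel-verified Lean document; each statement's English description precedes it below -/
import Mathlib

section
/- Let H be a simple graph and let (G, σ) be an H-colored graph, i.e., a simple graph G together with a coloring σ : V(G) → V(H). A set X ⊆ V(G) hits all σ-H-subgraphs of G if and only if there exists a connected component C of H such that, setting V_C = σ⁻¹(C), the set X ∩ V_C hits all σ|_{V_C}-C-subgraphs of the induced subgraph G[V_C]. -/
/-!
STATEMENT 0: For an `H`-colored graph `(G, σ)`, a set `X ⊆ V(G)` hits all
`σ`-`H`-subgraphs of `G` iff there exists a connected component `C` of `H` such that,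
with `V_C = σ⁻¹(C)`, the set `X ∩ V_C` hits all `σ|_{V_C}`-`C`-subgraphs of `G[V_C]`.
-/

theorem colorful_hitting_componentwise {V W : Type*} (H : SimpleGraph W) (G : SimpleGraph V)
    (σ : V → W) (X : Set V) :
    (∀ π : W → V,
        (∀ a b : W, H.Adj a b → G.Adj (π a) (π b)) →
        (∀ a : W, σ (π a) = a) →
        ∃ a : W, π a ∈ X)
    ↔ ∃ c : H.ConnectedComponent,
        ∀ π : {a : W | H.connectedComponentMk a = c} →
              {v : V | σ v ∈ {a : W | H.connectedComponentMk a = c}},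
          (∀ a b : {a : W | H.connectedComponentMk a = c},
              (H.induce {a : W | H.connectedComponentMk a = c}).Adj a b →
              (G.induce {v : V | σ v ∈ {a : W | H.connectedComponentMk a = c}}).Adj (π a) (π b)) →
          (∀ a : {a : W | H.connectedComponentMk a = c}, σ (π a : V) = (a : W)) →
          ∃ a : {a : W | H.connectedComponentMk a = c},
            (π a : V) ∈ X ∩ {v : V | σ v ∈ {a : W | H.connectedComponentMk a = c}} := by
  constructor
  · intro hX
    by_contra h
    push_neg at h
    choose f hadj hσ hmiss using h
    -- glue the component maps into a global map
    have hcongr : ∀ (c d : H.ConnectedComponent) (hcd : c = d)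
        (x : {a : W | H.connectedComponentMk a = c})
        (y : {a : W | H.connectedComponentMk a = d}), (x : W) = (y : W) →
        (f c x : V) = (f d y : V) := by
      rintro c _ rfl ⟨x, hx⟩ ⟨y, hy⟩ rfl
      rfl
    set PP : W → V := fun a => (f (H.connectedComponentMk a) ⟨a, rfl⟩ : V) with hPPdef
    obtain ⟨a, ha⟩ := hX PP
      (by
        intro a b hab
        have e : H.connectedComponentMk a = H.connectedComponentMk b :=
          SimpleGraph.ConnectedComponent.sound hab.reachable
        show G.Adj (f (H.connectedComponentMk a) ⟨a, rfl⟩ : V)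
          (f (H.connectedComponentMk b) ⟨b, rfl⟩ : V)
        rw [hcongr (H.connectedComponentMk b) (H.connectedComponentMk a) e.symm
          ⟨b, rfl⟩ ⟨b, e.symm⟩ rfl]
        exact hadj (H.connectedComponentMk a) ⟨a, rfl⟩ ⟨b, e.symm⟩ hab)
      (by intro a; exact hσ (H.connectedComponentMk a) ⟨a, rfl⟩)
    exact hmiss (H.connectedComponentMk a) ⟨a, rfl⟩
      ⟨ha, by
        simp only [Set.mem_setOf_eq, hσ (H.connectedComponentMk a) ⟨a, rfl⟩]⟩
  · rintro ⟨c, hc⟩ π hadjπ hσπ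
    set S : Set W := {a : W | H.connectedComponentMk a = c} with hS
    set T : Set V := {v : V | σ v ∈ S} with hT
    have hmem : ∀ a : S, π (a : W) ∈ T := by
      rintro ⟨a, ha⟩
      show σ (π a) ∈ S
      rw [hσπ a]
      exact ha
    set π' : S → T := fun a => ⟨π (a : W), hmem a⟩ with hπ'
    obtain ⟨a, ha⟩ := hc π'
      (by
        intro a b hab
        exact hadjπ (a : W) (b : W) hab)
      (by rintro ⟨a, ha⟩; exact hσπ a)
    exact ⟨(a : W), ha.1⟩
end

section
/- Let H be a finite simple graph and let a, b be distinct vertices lying in the same connected component of H, and let S be a minimal ab-separator in H (note S is then nonempty). Then there exists a nonempty set A ⊆ V(H) such that the induced subgraph H[A] is connected, N_H(A) = S, b ∉ N_H[A], and N_H(N_H[A]) ≠ ∅ (i.e., N_H[A] is not an entire connected component of H). Consequently, every minimal separator of H arising from two vertices in a common component is the boundary N_H(A) of a connected set A whose closed neighborhood is not a whole component, so μ(H) ≤ μ*(H). -/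
open SimpleGraph


/-!
STATEMENT 2: If `S` is a minimal `ab`-separator in a finite simple graph `H`, where `a, b` are
distinct vertices in a common connected component, then there is a nonempty set `A ⊆ V(H)`
with `H[A]` connected, `N_H(A) = S`, `b ∉ N_H[A]`, and `N_H(N_H[A]) ≠ ∅`.
-/

/-- The (open) neighborhood of a set `A`: vertices outside `A` with a neighbor in `A`. -/
def nbhd {V : Type*} (H : SimpleGraph V) (A : Set V) : Set V :=
  {v | v ∉ A ∧ ∃ a ∈ A, H.Adj a v}

/-- `S` is an `ab`-separator: `a, b ∉ S` and `a` and `b` lie in different connected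
components of `H − S`, i.e. every walk from `a` to `b` in `H` meets `S`. -/
def IsSep {V : Type*} (H : SimpleGraph V) (a b : V) (S : Set V) : Prop :=
  a ∉ S ∧ b ∉ S ∧ ∀ p : H.Walk a b, ∃ v ∈ p.support, v ∈ S

/-- `S` is a minimal `ab`-separator: no proper subset of `S` is an `ab`-separator. -/
def IsMinSep {V : Type*} (H : SimpleGraph V) (a b : V) (S : Set V) : Prop :=
  IsSep H a b S ∧ ∀ S' ⊂ S, ¬ IsSep H a b S'

private lemma key_lemma {V : Type*} {H : SimpleGraph V} {S : Set V} :
    ∀ {c s : V} (q : H.Walk c s), s ∈ S → c ∉ S → (∀ x ∈ q.support, x ∈ S → x = s) →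
    ∃ w, H.Adj w s ∧ w ∉ S ∧ ∃ r : H.Walk c w, ∀ x ∈ r.support, x ∉ S := by
  intro c s q
  induction q with
  | nil => intro h1 h2; exact (h2 h1).elim
  | @cons c d s h q ih =>
    intro hsS hc hsup
    by_cases hds : d = s
    · subst hds
      exact ⟨c, h, hc, SimpleGraph.Walk.nil, by simp [hc]⟩
    · have hd : d ∉ S := fun hdS => hds (hsup d (by simp) hdS)
      obtain ⟨w, hws, hwS, r, hr⟩ := ih hsS hd (fun x hx => hsup x (by simp [hx]))
      refine ⟨w, hws, hwS, SimpleGraph.Walk.cons h r, ?_⟩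
      intro x hx
      rw [SimpleGraph.Walk.support_cons, List.mem_cons] at hx
      rcases hx with rfl | hx
      · exact hc
      · exact hr x hx

private lemma reach_induce {V : Type*} {H : SimpleGraph V} {A : Set V} :
    ∀ {u v : V} (p : H.Walk u v), (∀ x ∈ p.support, x ∈ A) →
    ∀ (hu : u ∈ A) (hv : v ∈ A), (H.induce A).Reachable ⟨u, hu⟩ ⟨v, hv⟩ := by
  intro u v p
  induction p with
  | nil => intro _ hu hv; rfl
  | @cons u w v h q ih =>
    intro hp hu hv
    have hw : w ∈ A := hp w (by simp)
    have step : (H.induce A).Adj ⟨u, hu⟩ ⟨w, hw⟩ := by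
      rw [comap_adj]; exact h
    exact step.reachable.trans (ih (fun x hx => hp x (by simp [hx])) hw hv)

theorem minimal_separator_boundary_of_chunk {V : Type*} [Fintype V] (H : SimpleGraph V)
    (a b : V) (hab : a ≠ b) (hreach : H.Reachable a b)
    (S : Set V) (hS : IsMinSep H a b S) :
    ∃ A : Set V, A.Nonempty ∧ (H.induce A).Connected ∧ nbhd H A = S ∧
      b ∉ A ∪ nbhd H A ∧ (nbhd H (A ∪ nbhd H A)).Nonempty := by
  classical
  obtain ⟨⟨haS, hbS, hsep⟩, hmin⟩ := hS
  set A : Set V := {v | ∃ p : H.Walk a v, ∀ x ∈ p.support, x ∉ S} with hAdef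
  have haA : a ∈ A := ⟨SimpleGraph.Walk.nil, by simp [haS]⟩
  have hAS : ∀ v ∈ A, v ∉ S := fun v ⟨p, hp⟩ => hp v p.end_mem_support
  have hbA : b ∉ A := by
    rintro ⟨p, hp⟩
    obtain ⟨v, hv, hvS⟩ := hsep p
    exact hp v hv hvS
  -- closure: neighbors of A outside S are in A
  have hclose : ∀ v ∈ A, ∀ w, H.Adj v w → w ∉ S → w ∈ A := by
    rintro v ⟨p, hp⟩ w hvw hwS
    refine ⟨p.concat hvw, ?_⟩
    intro x hx
    rw [SimpleGraph.Walk.support_concat, List.mem_append,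
      List.mem_singleton] at hx
    rcases hx with hx | rfl
    · exact hp x hx
    · exact hwS
  -- prefix: all support vertices of a defining walk are in A
  have hpre : ∀ v ∈ A, ∀ (p : H.Walk a v), (∀ x ∈ p.support, x ∉ S) →
      ∀ x ∈ p.support, x ∈ A := by
    intro v _ p hp x hx
    exact ⟨p.takeUntil x hx, fun y hy => hp y (p.support_takeUntil_subset hx hy)⟩
  -- not-separator extraction from minimality
  have hnotsep : ∀ s ∈ S, ∃ p : H.Walk a b, ∀ x ∈ p.support, x ∈ S → x = s := by
    intro s hsS
    have hsub : S \ {s} ⊂ S := Set.sdiff_singleton_ssubset.mpr hsS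
    have := hmin _ hsub
    rw [IsSep] at this
    push_neg at this
    obtain ⟨p, hp⟩ := this (fun h => haS h.1) (fun h => hbS h.1)
    refine ⟨p, fun x hx hxS => ?_⟩
    by_contra hxs
    exact hp x hx ⟨hxS, hxs⟩
  -- nbhd A = S
  have hnbhd : nbhd H A = S := by
    ext v
    constructor
    · rintro ⟨hvA, u, huA, huv⟩
      by_contra hvS
      exact hvA (hclose u huA v huv hvS)
    · intro hvS
      obtain ⟨p, hp⟩ := hnotsep v hvS
      obtain ⟨x, hx, hxS⟩ := hsep p
      have hxv : x = v := hp x hx hxS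
      subst hxv
      obtain ⟨w, hws, hwS, r, hr⟩ := key_lemma (p.takeUntil x hx) hvS haS
        (fun y hy => hp y (p.support_takeUntil_subset hx hy))
      refine ⟨fun hxA => hAS x hxA hvS, w, ⟨r, hr⟩, hws⟩
  refine ⟨A, ⟨a, haA⟩, ?_, hnbhd, ?_, ?_⟩
  · -- connectedness
    have : Nonempty ↑A := ⟨⟨a, haA⟩⟩
    refine ⟨fun u v => ?_⟩
    obtain ⟨u, hu⟩ := u
    obtain ⟨v, hv⟩ := v
    obtain ⟨p, hp⟩ := hu
    obtain ⟨q, hq⟩ := hv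
    exact (reach_induce p (hpre u ⟨p, hp⟩ p hp) haA ⟨p, hp⟩).symm.trans
      (reach_induce q (hpre v ⟨q, hq⟩ q hq) haA ⟨q, hq⟩)
  · rw [hnbhd]
    rintro (h | h)
    · exact hbA h
    · exact hbS h
  · -- nonempty outer neighborhood
    rw [hnbhd]
    obtain ⟨p0⟩ := hreach
    obtain ⟨s, _, hsS⟩ := hsep p0
    obtain ⟨p, hp⟩ := hnotsep s hsS
    have hsp : s ∈ p.reverse.support := by
      obtain ⟨x, hx, hxS⟩ := hsep p
      have := hp x hx hxS
      subst this
      simpa using hx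
    obtain ⟨w, hws, hwS, r, hr⟩ := key_lemma (p.reverse.takeUntil s hsp) hsS hbS
      (fun y hy => hp y (by
        have := p.reverse.support_takeUntil_subset hsp hy
        simpa using this))
    -- w is adjacent to s, w ∉ S, and reaches b avoiding S, so w ∉ A
    have hwA : w ∉ A := by
      rintro ⟨pa, hpa⟩
      have pab : H.Walk a b := pa.append r.reverse
      obtain ⟨x, hx, hxS⟩ := hsep (pa.append r.reverse)
      rw [SimpleGraph.Walk.mem_support_append_iff] at hx
      rcases hx with hx | hx
      · exact hpa x hx hxS
      · exact hr x (by simpa using hx) hxS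
    refine ⟨w, ?_, s, Or.inr hsS, hws.symm⟩
    rintro (h | h)
    exacts [hwA h, hwS h]
end

section
/- Every finite connected simple graph that is not isomorphic to a path graph P_n (for any n ≥ 1) contains at least three vertices that are not cutvertices. -/
/-!
STATEMENT 4: Every finite connected simple graph that is not isomorphic to a path graph `P_n`
(for any `n ≥ 1`) contains at least three vertices that are not cutvertices.
-/

/-- `v` is a cutvertex of `G`: deleting `v` increases the number of connected components,
i.e. there are two vertices different from `v` lying in the same connected component of `G`
but in different connected components of `G − v` (every walk between them passes through `v`). -/
def IsCutVertex {V : Type*} (G : SimpleGraph V) (v : V) : Prop :=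
  ∃ x y : V, x ≠ v ∧ y ≠ v ∧ G.Reachable x y ∧ ∀ p : G.Walk x y, v ∈ p.support

namespace ThreeNoncut

open SimpleGraph Walk

variable {V : Type*} {G : SimpleGraph V}

/-- If `v` is a cutvertex and `u ≠ v`, then some vertex `x ≠ v` is separated from `u` by `v`. -/
lemma sep_of_cut {v : V} (hv : IsCutVertex G v) {u : V} (_hu : u ≠ v) :
    ∃ x, x ≠ v ∧ ∀ p : G.Walk u x, v ∈ p.support := by
  obtain ⟨x, y, hx, hy, _, hall⟩ := hv
  by_cases h : ∀ p : G.Walk u x, v ∈ p.support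
  · exact ⟨x, hx, h⟩
  · push_neg at h
    obtain ⟨p, hp⟩ := h
    refine ⟨y, hy, fun q => ?_⟩
    by_contra hq
    have := hall (p.reverse.append q)
    rw [Walk.mem_support_append_iff] at this
    rcases this with h1 | h1
    · rw [Walk.support_reverse, List.mem_reverse] at h1
      exact hp h1
    · exact hq h1

lemma dist_lt_of_sep (hG : G.Connected) {u v x : V} (hvx : x ≠ v)
    (hall : ∀ p : G.Walk u x, v ∈ p.support) : G.dist u v < G.dist u x := by
  classical
  obtain ⟨p, _, hlen⟩ := hG.exists_path_of_dist u x
  have hv := hall p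
  have h1 : G.dist u v ≤ (p.takeUntil v hv).length := SimpleGraph.dist_le _
  have h2 : (p.takeUntil v hv).length + (p.dropUntil v hv).length = p.length := by
    have := congrArg Walk.length (p.take_spec hv)
    rwa [Walk.length_append] at this
  have h3 : (p.dropUntil v hv).length ≠ 0 := by
    intro h0
    exact hvx (Walk.eq_of_length_eq_zero h0).symm
  omega

/-- A vertex at maximum distance from `u` is not a cutvertex. -/
lemma noncut_of_farthest (hG : G.Connected) {u a : V}
    (hmax : ∀ w, G.dist u w ≤ G.dist u a) (hua : u ≠ a) : ¬IsCutVertex G a := by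
  intro hcut
  obtain ⟨x, hx, hall⟩ := sep_of_cut hcut hua
  exact absurd (hmax x) (not_le.2 (dist_lt_of_sep hG hx hall))

/-- Each "component of `G − c`" contains a non-cutvertex of `G`: among the vertices
reachable from `x` avoiding `c`, the one farthest from `c` is not a cutvertex. -/
lemma exists_noncut_avoid [Fintype V] (hG : G.Connected) {c x : V} (hx : x ≠ c) :
    ∃ z, ¬IsCutVertex G z ∧ ∃ p : G.Walk x z, c ∉ p.support := by
  classical
  let S : Finset V := Finset.univ.filter (fun w => ∃ p : G.Walk x w, c ∉ p.support)
  have hxS : x ∈ S := by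
    refine Finset.mem_filter.2 ⟨Finset.mem_univ _, Walk.nil, ?_⟩
    simp [hx.symm]
  obtain ⟨z, hzS, hzmax⟩ := S.exists_max_image (fun w => G.dist c w) ⟨x, hxS⟩
  obtain ⟨-, pz, hpz⟩ := Finset.mem_filter.1 hzS
  have hzc : z ≠ c := fun h => hpz (h ▸ pz.end_mem_support)
  refine ⟨z, ?_, pz, hpz⟩
  intro hcut
  obtain ⟨t, htz, hall⟩ := sep_of_cut hcut (Ne.symm hzc)
  have hd : G.dist c z < G.dist c t := dist_lt_of_sep hG htz hall
  -- show `t` is also reachable from `x` avoiding `c`, contradicting maximality of `z`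
  obtain ⟨q, hq, -⟩ := hG.exists_path_of_dist c t
  have hzq : z ∈ q.support := hall q
  have hcdrop : c ∉ (q.dropUntil z hzq).support := by
    intro hc
    have hc' : c ∈ (q.dropUntil z hzq).support.tail := by
      rw [Walk.support_eq_cons (q.dropUntil z hzq), List.mem_cons] at hc
      rcases hc with hc | hc
      · exact absurd hc.symm hzc
      · exact hc
    have hnodup : (q.support).Nodup := hq.support_nodup
    rw [← q.take_spec hzq, Walk.support_append] at hnodup
    exact (List.disjoint_of_nodup_append hnodup) (q.takeUntil z hzq).start_mem_support hc'
  have htS : t ∈ S := by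
    refine Finset.mem_filter.2 ⟨Finset.mem_univ _, pz.append (q.dropUntil z hzq), ?_⟩
    rw [Walk.mem_support_append_iff]
    rintro (h | h)
    · exact hpz h
    · exact hcdrop h
  exact absurd (hzmax t htS) (not_le.2 hd)

/-- If some (equivalently, every) shortest `a–b` walk covers all of `V`, and in fact all
`a–b` walks cover `V`, then `G` is a path graph. -/
lemma iso_path [Fintype V] (hG : G.Connected) (a b : V)
    (hcov : ∀ p : G.Walk a b, ∀ v, v ∈ p.support) :
    Nonempty (G ≃g SimpleGraph.pathGraph (G.dist a b + 1)) := by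
  classical
  set d := G.dist a b with hd
  obtain ⟨P, hP, hlen⟩ := hG.exists_path_of_dist a b
  have hcovP : ∀ v, v ∈ P.support := hcov P
  have hnodup : P.support.Nodup := hP.support_nodup
  -- cardinality
  have hcard : Fintype.card V = d + 1 := by
    have h1 : P.support.toFinset = Finset.univ := by
      ext v; simp [hcovP v]
    have h2 : P.support.toFinset.card = P.support.length := List.toFinset_card_of_nodup hnodup
    rw [h1] at h2
    rw [← Finset.card_univ, h2, Walk.length_support, hlen]
  -- the distance from `a` identifies each vertex's position on `P`
  have hsplit : ∀ v (hv : v ∈ P.support),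
      (P.takeUntil v hv).length + (P.dropUntil v hv).length = P.length := by
    intro v hv
    have := congrArg Walk.length (P.take_spec hv)
    rwa [Walk.length_append] at this
  have hdist : ∀ v, G.dist a v = (P.takeUntil v (hcovP v)).length := by
    intro v
    have hv := hcovP v
    have h1 : G.dist a v ≤ (P.takeUntil v hv).length := SimpleGraph.dist_le _
    have h2 : G.dist v b ≤ (P.dropUntil v hv).length := SimpleGraph.dist_le _
    have h3 : d ≤ G.dist a v + G.dist v b := hG.dist_triangle
    have h4 := hsplit v hv
    rw [hlen] at h4
    omega
  have hfle : ∀ v, G.dist a v ≤ d := by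
    intro v
    rw [hdist v]
    have := Walk.length_takeUntil_le P (hcovP v)
    omega
  have hget : ∀ v, P.getVert (G.dist a v) = v := by
    intro v
    have hv := hcovP v
    have hgv := congrArg (fun (w : G.Walk a b) => w.getVert (P.takeUntil v hv).length)
      (P.take_spec hv)
    simp only [Walk.getVert_append, lt_irrefl, if_false, Nat.sub_self,
      Walk.getVert_zero] at hgv
    rw [hdist v, ← hgv]
  have hinj : Function.Injective (fun v => G.dist a v) := by
    intro u v huv
    have h1 := hget u
    have h2 := hget v
    simp only at huv
    rw [huv] at h1
    rw [← h1, h2]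
  -- the equivalence
  let f : V → Fin (d + 1) := fun v => ⟨G.dist a v, Nat.lt_succ_of_le (hfle v)⟩
  have hfinj : Function.Injective f := by
    intro u v huv
    apply hinj
    simpa [f, Fin.ext_iff] using huv
  have hfbij : Function.Bijective f := by
    rw [Fintype.bijective_iff_injective_and_card]
    exact ⟨hfinj, by simp [hcard]⟩
  let e : V ≃ Fin (d + 1) := Equiv.ofBijective f hfbij
  have he : ∀ v, (e v : ℕ) = G.dist a v := fun v => rfl
  refine ⟨⟨e, ?_⟩⟩
  intro u v
  rw [SimpleGraph.pathGraph_adj]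
  simp only [he]
  constructor
  · rintro (h | h)
    · -- dist a u + 1 = dist a v
      have hlt : G.dist a u < P.length := by
        have := hfle v
        omega
      have hadj := P.adj_getVert_succ hlt
      rw [hget u] at hadj
      rw [h, hget v] at hadj
      exact hadj
    · have hlt : G.dist a v < P.length := by
        have := hfle u
        omega
      have hadj := P.adj_getVert_succ hlt
      rw [hget v] at hadj
      rw [h, hget u] at hadj
      exact hadj.symm
  · intro hadj
    have hne : G.dist a u ≠ G.dist a v := fun h => hadj.ne (hinj h)
    have h1 : G.dist a u ≤ G.dist a v + 1 := by
      have ht : G.dist a u ≤ G.dist a v + G.dist v u := hG.dist_triangle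
      have : G.dist v u ≤ 1 := SimpleGraph.dist_le (Walk.cons hadj.symm Walk.nil)
      omega
    have h2 : G.dist a v ≤ G.dist a u + 1 := by
      have ht : G.dist a v ≤ G.dist a u + G.dist u v := hG.dist_triangle
      have : G.dist u v ≤ 1 := SimpleGraph.dist_le (Walk.cons hadj Walk.nil)
      omega
    omega

end ThreeNoncut

theorem three_noncut_vertices {V : Type*} [Fintype V] (G : SimpleGraph V)
    (hconn : G.Connected)
    (hpath : ∀ n : ℕ, 1 ≤ n → IsEmpty (G ≃g SimpleGraph.pathGraph n)) :
    ∃ a b c : V, a ≠ b ∧ a ≠ c ∧ b ≠ c ∧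
      ¬ IsCutVertex G a ∧ ¬ IsCutVertex G b ∧ ¬ IsCutVertex G c := by
  classical
  open SimpleGraph Walk ThreeNoncut in
  have hne : Nonempty V := hconn.nonempty
  by_cases hsub : ∀ u v : V, u = v
  · -- a single vertex: G is the path graph P₁
    exfalso
    obtain ⟨v⟩ := hne
    have hcov : ∀ p : G.Walk v v, ∀ w, w ∈ p.support := by
      intro p w
      rw [hsub w v]
      exact p.start_mem_support
    obtain ⟨iso⟩ := ThreeNoncut.iso_path hconn v v hcov
    exact (hpath (G.dist v v + 1) (by omega)).false iso
  · push_neg at hsub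
    obtain ⟨u0, v0, huv⟩ := hsub
    -- a : farthest from u0
    obtain ⟨a, -, hamax⟩ := Finset.exists_max_image Finset.univ (G.dist u0) ⟨u0, Finset.mem_univ u0⟩
    have hamax' : ∀ w, G.dist u0 w ≤ G.dist u0 a := fun w => hamax w (Finset.mem_univ w)
    have hu0a : u0 ≠ a := by
      intro h
      have h1 : G.dist u0 v0 ≠ 0 := fun h0 => huv (hconn.dist_eq_zero_iff.1 h0)
      have h2 := hamax' v0
      rw [← h, SimpleGraph.dist_self] at h2
      exact h1 (Nat.le_zero.mp h2)
    have hanc : ¬IsCutVertex G a := ThreeNoncut.noncut_of_farthest hconn hamax' hu0a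
    -- b : farthest from a
    obtain ⟨b, -, hbmax⟩ := Finset.exists_max_image Finset.univ (G.dist a) ⟨a, Finset.mem_univ a⟩
    have hbmax' : ∀ w, G.dist a w ≤ G.dist a b := fun w => hbmax w (Finset.mem_univ w)
    have hab : a ≠ b := by
      intro h
      have h1 : G.dist a u0 ≠ 0 := fun h0 => (Ne.symm hu0a) (hconn.dist_eq_zero_iff.1 h0)
      have h2 := hbmax' u0
      rw [← h, SimpleGraph.dist_self] at h2
      exact h1 (Nat.le_zero.mp h2)
    have hbnc : ¬IsCutVertex G b := ThreeNoncut.noncut_of_farthest hconn hbmax' hab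
    by_cases hc : ∃ c, c ≠ a ∧ c ≠ b ∧ ¬IsCutVertex G c
    · obtain ⟨c, hca, hcb, hcnc⟩ := hc
      exact ⟨a, b, c, hab, hca.symm, hcb.symm, hanc, hbnc, hcnc⟩
    · exfalso
      push_neg at hc
      have honly : ∀ w, ¬IsCutVertex G w → w = a ∨ w = b := by
        intro w hw
        by_contra h
        push_neg at h
        exact hw (hc w h.1 h.2)
      -- every cutvertex lies on every a–b walk
      have key : ∀ c, IsCutVertex G c → ∀ p : G.Walk a b, c ∈ p.support := by
        intro c hcut
        obtain ⟨x, y, hx, hy, -, hall⟩ := hcut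
        obtain ⟨z₁, hz₁nc, px, hpx⟩ := ThreeNoncut.exists_noncut_avoid hconn hx
        obtain ⟨z₂, hz₂nc, py, hpy⟩ := ThreeNoncut.exists_noncut_avoid hconn hy
        -- every walk z₁ → z₂ passes through c
        have hsep : ∀ w : G.Walk z₁ z₂, c ∈ w.support := by
          intro w
          by_contra hw
          have := hall (px.append (w.append py.reverse))
          rw [Walk.mem_support_append_iff, Walk.mem_support_append_iff] at this
          rcases this with h | h | h
          · exact hpx h
          · exact hw h
          · rw [Walk.support_reverse, List.mem_reverse] at h
            exact hpy h
        have hz₁z₂ : z₁ ≠ z₂ := by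
          intro h
          subst h
          have hmem := hsep Walk.nil
          simp [Walk.support_nil] at hmem
          exact hpx (hmem ▸ px.end_mem_support)
        rcases honly z₁ hz₁nc with h1 | h1 <;> rcases honly z₂ hz₂nc with h2 | h2
        · exact absurd (h1.trans h2.symm) hz₁z₂
        · subst h1; subst h2
          exact fun p => hsep p
        · subst h1; subst h2
          intro p
          have := hsep p.reverse
          rwa [Walk.support_reverse, List.mem_reverse] at this
        · exact absurd (h1.trans h2.symm) hz₁z₂
      have hcov : ∀ p : G.Walk a b, ∀ v, v ∈ p.support := by
        intro p v
        by_cases hv : IsCutVertex G v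
        · exact key v hv p
        · rcases honly v hv with h | h
          · rw [h]; exact p.start_mem_support
          · rw [h]; exact p.end_mem_support
      obtain ⟨iso⟩ := ThreeNoncut.iso_path hconn a b hcov
      exact (hpath (G.dist a b + 1) (by omega)).false iso
end

section
/- Let H be a finite simple graph and D ⊆ V(H). Define ∂D = D ∩ N_H(V(H) ∖ D) (the vertices of D having a neighbor outside D) and int D = D ∖ ∂D. Then the set P := N_H[int D] satisfies: (a) P ⊆ D; (b) P is a slice, i.e., N_H(int P) = ∂P where ∂P and int P are the boundary and interior of P; (c) int P = int D; (d) ∂P ⊆ ∂D and ∂D ∖ ∂P = D ∖ P; and (e) P is the unique inclusion-wise maximal slice contained in D, i.e., every slice P' ⊆ D satisfies P' ⊆ P. -/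
/-- The boundary of `D`: `∂D = D ∩ N_H(V(H) ∖ D)`, the vertices of `D` having a neighbor
outside `D`. -/
def bdry {V : Type*} (H : SimpleGraph V) (D : Set V) : Set V :=
  D ∩ nbhd H Dᶜ

/-- The interior of `D`: `int D = D ∖ ∂D`. -/
def intr {V : Type*} (H : SimpleGraph V) (D : Set V) : Set V :=
  D \ bdry H D

/-- `D` is a slice if `N_H(int D) = ∂D`. -/
def IsSlice {V : Type*} (H : SimpleGraph V) (D : Set V) : Prop :=
  nbhd H (intr H D) = bdry H D

lemma mem_intr_iff {V : Type*} (H : SimpleGraph V) (D : Set V) (v : V) :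
    v ∈ intr H D ↔ v ∈ D ∧ ∀ w, H.Adj v w → w ∈ D := by
  simp only [intr, bdry, nbhd, Set.mem_diff, Set.mem_inter_iff, Set.mem_setOf_eq,
    Set.mem_compl_iff]
  constructor
  · rintro ⟨hvD, h⟩
    refine ⟨hvD, fun w hw => ?_⟩
    by_contra hwD
    exact h ⟨hvD, not_not.mpr hvD, w, hwD, hw.symm⟩
  · rintro ⟨hvD, h⟩
    refine ⟨hvD, fun ⟨_, _, a, haD, ha⟩ => haD (h a ha.symm)⟩

lemma bdry_eq_diff_intr {V : Type*} (H : SimpleGraph V) (D : Set V) :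
    bdry H D = D \ intr H D := by
  ext v
  simp only [intr, bdry, Set.mem_diff, Set.mem_inter_iff]
  tauto

theorem core_slice_properties {V : Type*} [Fintype V] (H : SimpleGraph V) (D : Set V)
    (P : Set V) (hP : P = intr H D ∪ nbhd H (intr H D)) :
    P ⊆ D ∧
    IsSlice H P ∧
    intr H P = intr H D ∧
    (bdry H P ⊆ bdry H D ∧ bdry H D \ bdry H P = D \ P) ∧
    (∀ P' : Set V, P' ⊆ D → IsSlice H P' → P' ⊆ P) := by
  -- (a)
  have ha : P ⊆ D := by
    rw [hP]
    rintro v (hv | ⟨hv, a, haI, ha⟩)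
    · exact ((mem_intr_iff H D v).mp hv).1
    · exact ((mem_intr_iff H D a).mp haI).2 v ha
  -- (c)
  have hc : intr H P = intr H D := by
    ext v
    rw [mem_intr_iff, mem_intr_iff]
    constructor
    · rintro ⟨hvP, h⟩
      exact ⟨ha hvP, fun w hw => ha (h w hw)⟩
    · rintro ⟨hvD, h⟩
      have hvI : v ∈ intr H D := (mem_intr_iff H D v).mpr ⟨hvD, h⟩
      refine ⟨hP ▸ Set.mem_union_left _ hvI, fun w hw => ?_⟩
      rw [hP]
      by_cases hwI : w ∈ intr H D
      · exact Set.mem_union_left _ hwI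
      · exact Set.mem_union_right _ ⟨hwI, v, hvI, hw⟩
  -- bdry P = nbhd (intr D)
  have hbP : bdry H P = nbhd H (intr H D) := by
    rw [bdry_eq_diff_intr, hc]
    ext v
    simp only [Set.mem_diff, hP, Set.mem_union, nbhd, Set.mem_setOf_eq]
    tauto
  -- (b)
  have hb : IsSlice H P := by
    rw [IsSlice, hc, hbP]
  -- (d)
  have hd1 : bdry H P ⊆ bdry H D := by
    rw [hbP, bdry_eq_diff_intr]
    rintro v hv
    exact ⟨ha (hP ▸ Set.mem_union_right _ hv), hv.1⟩
  have hd2 : bdry H D \ bdry H P = D \ P := by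
    ext v
    rw [hbP, bdry_eq_diff_intr]
    simp only [Set.mem_diff, hP, Set.mem_union]
    constructor
    · rintro ⟨⟨hvD, hvI⟩, hvN⟩
      exact ⟨hvD, fun h => h.elim hvI hvN⟩
    · rintro ⟨hvD, hvP⟩
      have hvI : v ∉ intr H D := fun h => hvP (Or.inl h)
      exact ⟨⟨hvD, hvI⟩, fun h => hvP (Or.inr h)⟩
  -- (e)
  have he : ∀ P' : Set V, P' ⊆ D → IsSlice H P' → P' ⊆ P := by
    intro P' hsub hslice v hv
    have hII : intr H P' ⊆ intr H D := by
      intro w hw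
      rw [mem_intr_iff] at hw ⊢
      exact ⟨hsub hw.1, fun u hu => hsub (hw.2 u hu)⟩
    by_cases hvI : v ∈ intr H P'
    · exact hP ▸ Set.mem_union_left _ (hII hvI)
    · have hvb : v ∈ bdry H P' := by
        rw [bdry_eq_diff_intr]; exact ⟨hv, hvI⟩
      rw [← hslice] at hvb
      obtain ⟨-, a, haI, ha⟩ := hvb
      rw [hP]
      by_cases hvD : v ∈ intr H D
      · exact Set.mem_union_left _ hvD
      · exact Set.mem_union_right _ ⟨hvD, a, hII haI, ha⟩
  exact ⟨ha, hb, hc, ⟨hd1, hd2⟩, he⟩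
end

section
/- Let H be a finite simple graph, let a0, b0 be distinct vertices lying in the same connected component of H, and let S be a minimal a0b0-separator in H. Then there exist vertices a and b of H such that neither a nor b is a cutvertex of H and S is a minimal ab-separator in H. In particular, if μ(H) ≥ 1 then the maximum size μ(H) of a minimal separator is attained by a minimal ab-separator whose endpoints a, b are both non-cutvertices of H. -/
open SimpleGraph Walk

/-- Key lemma: there is a non-cutvertex in the component of `a0` in `H − S`. -/
lemma exists_noncut_in_component {V : Type*} [Fintype V] (H : SimpleGraph V)
    (a0 b0 : V) (S : Set V) (ha0 : a0 ∉ S) (hreach : H.Reachable a0 b0)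
    (hsep : ∀ p : H.Walk a0 b0, ∃ v ∈ p.support, v ∈ S)
    (hmin : ∀ s ∈ S, ∃ p : H.Walk a0 b0, ∀ v ∈ p.support, v ∈ S → v = s) :
    ∃ a : V, ¬ IsCutVertex H a ∧ ∃ w : H.Walk a0 a, ∀ v ∈ w.support, v ∉ S := by
  classical
  set A : Set V := {x | ∃ w : H.Walk a0 x, ∀ v ∈ w.support, v ∉ S} with hA
  have ha0A : a0 ∈ A := ⟨Walk.nil, by simp [ha0]⟩
  have hAS : ∀ x ∈ A, x ∉ S := fun x hx => hx.choose_spec x hx.choose.end_mem_support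
  have hb0A : b0 ∉ A := by
    rintro ⟨w, hw⟩
    obtain ⟨v, hv, hvS⟩ := hsep w
    exact hw v hv hvS
  have hreachA : ∀ x ∈ A, H.Reachable b0 x := fun x hx => hreach.symm.trans ⟨hx.choose⟩
  -- L1: every vertex of S can reach b0 avoiding A
  have L1 : ∀ s ∈ S, ∃ q : H.Walk s b0, ∀ v ∈ q.support, v ∉ A := by
    intro s hs
    obtain ⟨p, hp⟩ := hmin s hs
    have hsp : s ∈ p.reverse.support := by
      obtain ⟨v, hv, hvS⟩ := hsep p
      rw [support_reverse, List.mem_reverse]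
      exact (hp v hv hvS) ▸ hv
    set r := p.reverse.takeUntil s hsp with hr
    have hrsub : ∀ v ∈ r.support, v ∈ p.support := fun v hv => by
      have := p.reverse.support_takeUntil_subset hsp hv
      rwa [support_reverse, List.mem_reverse] at this
    have hcount : r.support.count s = 1 := p.reverse.count_support_takeUntil_eq_one hsp
    refine ⟨r.reverse, ?_⟩
    intro v hv hvA
    rw [support_reverse, List.mem_reverse] at hv
    by_cases hvs : v = s
    · exact hAS v hvA (hvs ▸ hs)
    · -- build a walk a0 → v → b0 avoiding S, contradiction with hsep
      obtain ⟨w, hw⟩ := hvA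
      have hsnot : s ∉ (r.takeUntil v hv).support := by
        have hspec := r.take_spec hv
        have hcnt : (r.takeUntil v hv).support.count s
            + ((r.dropUntil v hv).support.tail.count s) = 1 := by
          rw [← List.count_append, ← support_append, hspec, hcount]
        have hse : s ∈ (r.dropUntil v hv).support := end_mem_support _
        have : s ∈ (r.dropUntil v hv).support.tail := by
          have h' := hse
          rw [support_eq_cons (r.dropUntil v hv), List.mem_cons] at h'
          exact h'.resolve_left (fun hh => hvs hh.symm)
        have h1 : 1 ≤ (r.dropUntil v hv).support.tail.count s := List.one_le_count_iff.mpr this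
        have : (r.takeUntil v hv).support.count s = 0 := by omega
        exact List.count_eq_zero.mp this
      obtain ⟨u, hu, huS⟩ := hsep (w.append (r.takeUntil v hv).reverse)
      rw [mem_support_append_iff] at hu
      rcases hu with hu | hu
      · exact hw u hu huS
      · rw [support_reverse, List.mem_reverse] at hu
        have : u = s := hp u (hrsub u (r.support_takeUntil_subset hv hu)) huS
        exact hsnot (this ▸ hu)
  -- L2: every vertex with a walk to b0 is either in A or reaches b0 avoiding A
  have L2 : ∀ (u : V) (w : H.Walk u b0),
      u ∈ A ∨ ∃ q : H.Walk u b0, ∀ v ∈ q.support, v ∉ A := by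
    intro u w
    induction w with
    | nil =>
      right
      refine ⟨Walk.nil, ?_⟩
      intro v hv
      simp only [support_nil, List.mem_singleton] at hv
      exact hv ▸ hb0A
    | @cons u u' _ h w ih =>
      by_cases hu : u ∈ S
      · exact Or.inr (L1 u hu)
      · rcases ih hreach hsep hmin hb0A hreachA L1 with hA' | ⟨q, hq⟩
        · left
          obtain ⟨w', hw'⟩ := hA'
          refine ⟨w'.concat h.symm, ?_⟩
          intro v hv
          simp only [support_concat, List.concat_eq_append, List.mem_append, List.mem_singleton] at hv
          rcases hv with hv | hv
          · exact hw' v hv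
          · exact hv ▸ hu
        · by_cases huA : u ∈ A
          · exact Or.inl huA
          · right
            refine ⟨Walk.cons h q, ?_⟩
            intro v hv
            rw [support_cons, List.mem_cons] at hv
            rcases hv with hv | hv
            · exact hv ▸ huA
            · exact hq v hv
  -- pick a ∈ A maximizing distance from b0
  obtain ⟨a, haA, hmax⟩ := Set.Finite.exists_maximalFor (fun x => H.dist b0 x) A
    (Set.toFinite A) ⟨a0, ha0A⟩
  refine ⟨a, ?_, haA⟩
  rintro ⟨x, y, hx, hy, hxy, hall⟩
  obtain ⟨pxy⟩ := hxy
  have hapxy : a ∈ pxy.support := hall pxy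
  have hab0 : H.Reachable a b0 := (hreachA a haA).symm
  have hxb0 : H.Reachable x b0 := Reachable.trans ⟨pxy.takeUntil a hapxy⟩ hab0
  have hyb0 : H.Reachable y b0 := Reachable.trans ⟨(pxy.dropUntil a hapxy).reverse⟩ hab0
  have key : ∃ u, u ≠ a ∧ H.Reachable u b0 ∧ ∀ q : H.Walk u b0, a ∈ q.support := by
    by_cases hx' : ∀ q : H.Walk x b0, a ∈ q.support
    · exact ⟨x, hx, hxb0, hx'⟩
    · push_neg at hx'
      obtain ⟨qx, hqx⟩ := hx'
      refine ⟨y, hy, hyb0, fun q => ?_⟩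
      by_contra hq
      have := hall (qx.append q.reverse)
      rw [mem_support_append_iff] at this
      rcases this with h | h
      · exact hqx h
      · rw [support_reverse, List.mem_reverse] at h
        exact hq h
  obtain ⟨u, hua, hub, hall'⟩ := key
  obtain ⟨w0⟩ := hub
  have huA : u ∈ A := by
    rcases L2 u w0 with h | ⟨q, hq⟩
    · exact h
    · exact absurd haA (hq a (hall' q))
  obtain ⟨p, hp⟩ := (hreachA u huA).exists_walk_length_eq_dist
  have hap : a ∈ p.support := by
    have := hall' p.reverse
    rwa [support_reverse, List.mem_reverse] at this
  have h1 : H.dist b0 a ≤ (p.takeUntil a hap).length := dist_le _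
  have h2 : (p.dropUntil a hap).length ≠ 0 :=
    fun h => hua (eq_of_length_eq_zero h).symm
  have hlen : (p.takeUntil a hap).length + (p.dropUntil a hap).length = p.length := by
    rw [← length_append, take_spec]
  have hlt : H.dist b0 a < H.dist b0 u := by omega
  have : H.dist b0 u ≤ H.dist b0 a := hmax huA hlt.le
  omega

theorem minimal_separator_noncut_endpoints {V : Type*} [Fintype V] (H : SimpleGraph V)
    (a0 b0 : V) (h0 : a0 ≠ b0) (hreach : H.Reachable a0 b0)
    (S : Set V) (hS : IsMinSep H a0 b0 S) :
    ∃ a b : V, ¬ IsCutVertex H a ∧ ¬ IsCutVertex H b ∧ IsMinSep H a b S := by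
  classical
  obtain ⟨⟨ha0, hb0, hsep⟩, hminS⟩ := hS
  have hmin : ∀ s ∈ S, ∃ p : H.Walk a0 b0, ∀ v ∈ p.support, v ∈ S → v = s := by
    intro s hs
    have hne : S \ {s} ⊂ S := by
      constructor
      · exact Set.diff_subset
      · intro hsub
        exact (hsub hs).2 rfl
    have hnot := hminS (S \ {s}) hne
    by_contra hc
    push_neg at hc
    refine hnot ⟨fun h => ha0 h.1, fun h => hb0 h.1, fun p => ?_⟩
    obtain ⟨v, hv, hvS, hvs⟩ := hc p
    exact ⟨v, hv, hvS, hvs⟩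
  have hsep' : ∀ p : H.Walk b0 a0, ∃ v ∈ p.support, v ∈ S := by
    intro p
    obtain ⟨v, hv, h⟩ := hsep p.reverse
    rw [support_reverse, List.mem_reverse] at hv
    exact ⟨v, hv, h⟩
  have hmin' : ∀ s ∈ S, ∃ p : H.Walk b0 a0, ∀ v ∈ p.support, v ∈ S → v = s := by
    intro s hs
    obtain ⟨p, hp⟩ := hmin s hs
    exact ⟨p.reverse, fun v hv => hp v (by rwa [support_reverse, List.mem_reverse] at hv)⟩
  obtain ⟨a, hanc, wa, hwa⟩ :=
    exists_noncut_in_component H a0 b0 S ha0 hreach hsep hmin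
  obtain ⟨b, hbnc, wb, hwb⟩ :=
    exists_noncut_in_component H b0 a0 S hb0 hreach.symm hsep' hmin'
  have haS : a ∉ S := hwa a wa.end_mem_support
  have hbS : b ∉ S := hwb b wb.end_mem_support
  refine ⟨a, b, hanc, hbnc, ⟨haS, hbS, ?_⟩, ?_⟩
  · intro p
    obtain ⟨v, hv, hvS⟩ := hsep (wa.append (p.append wb.reverse))
    rw [mem_support_append_iff, mem_support_append_iff] at hv
    rcases hv with hv | hv | hv
    · exact absurd hvS (hwa v hv)
    · exact ⟨v, hv, hvS⟩
    · rw [support_reverse, List.mem_reverse] at hv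
      exact absurd hvS (hwb v hv)
  · intro S' hS' hIs
    obtain ⟨s, hsS, hsS'⟩ := Set.exists_of_ssubset hS'
    obtain ⟨p0, hp0⟩ := hmin s hsS
    obtain ⟨v, hv, hvS'⟩ := hIs.2.2 (wa.reverse.append (p0.append wb))
    have hvS : v ∈ S := hS'.subset hvS'
    rw [mem_support_append_iff, mem_support_append_iff] at hv
    rcases hv with hv | hv | hv
    · rw [support_reverse, List.mem_reverse] at hv
      exact hwa v hv hvS
    · exact hsS' ((hp0 v hv hvS) ▸ hvS')
    · exact hwb v hv hvS
end
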